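/- If b ∈ Θ̃, i.e. G(X,c,b)·E(H(Y,c)|G(X,c,b),G(X,c,γ)) ≥ 0 almost surely for all (γ,c) ∈ Γ × C, then b ∈ Θ, i.e. G(X,c,b)·E(H(Y,c)|X) ≥ 0 almost surely for all c ∈ C. (One direction of the dimension-reducing characterization: taking γ = β and using the sign restriction for β.) -/

import Mathlib

open MeasureTheory ProbabilityTheory

/-- Conditional expectation of `f` given the σ-algebra generated by the random element `X`. -/
noncomputable def condExpGiven {Ω 𝓧 : Type*} [MeasurableSpace Ω] [MeasurableSpace 𝓧]
    (μ : Measure Ω) (X : Ω → 𝓧) (f : Ω → ℝ) : Ω → ℝ :=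
  μ[f | MeasurableSpace.comap X inferInstance]

/-- Key auxiliary: a set measurable w.r.t. a sub-σ-algebra `m` on which `μ[f|m₂]` is
negative while `μ[f|m]` is nonnegative must be null. -/
lemma keylem_neg {Ω : Type*} {m m₂ m0 : MeasurableSpace Ω} (hm : m ≤ m₂) (hm₂ : m₂ ≤ m0)
    {μ : Measure Ω} [IsFiniteMeasure μ] {f : Ω → ℝ} (hf : Integrable f μ)
    {S : Set Ω} (hSm : MeasurableSet[m] S)
    (hWneg : ∀ᵐ ω ∂μ, ω ∈ S → (μ[f|m₂]) ω < 0)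
    (hEpos : ∀ᵐ ω ∂μ, ω ∈ S → 0 ≤ (μ[f|m]) ω) : μ S = 0 := by
  have hm0 : m ≤ m0 := hm.trans hm₂
  have hS : MeasurableSet S := hm0 _ hSm
  have hWint : Integrable (μ[f|m₂]) μ := integrable_condExp
  have h1 : ∫ ω in S, (μ[f|m₂]) ω ∂μ = ∫ ω in S, f ω ∂μ :=
    setIntegral_condExp hm₂ hf (hm _ hSm)
  have h2 : ∫ ω in S, (μ[f|m]) ω ∂μ = ∫ ω in S, f ω ∂μ :=
    setIntegral_condExp hm0 hf hSm
  have hge : 0 ≤ ∫ ω in S, (μ[f|m₂]) ω ∂μ := by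
    rw [h1, ← h2]
    exact setIntegral_nonneg_of_ae_restrict ((ae_restrict_iff' hS).mpr hEpos)
  have hWneg' : ∀ᵐ ω ∂(μ.restrict S), (μ[f|m₂]) ω < 0 := (ae_restrict_iff' hS).mpr hWneg
  have hle : ∫ ω in S, (μ[f|m₂]) ω ∂μ ≤ 0 :=
    integral_nonpos_of_ae (hWneg'.mono fun ω h => h.le)
  have hzero : ∫ ω in S, (-(μ[f|m₂])) ω ∂μ = 0 := by
    simp only [Pi.neg_apply]
    rw [integral_neg]
    linarith
  have hWzero : (-(μ[f|m₂])) =ᵐ[μ.restrict S] 0 :=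
    (integral_eq_zero_iff_of_nonneg_ae
      (hWneg'.mono fun ω h => by simp [Pi.neg_apply, h.le])
      hWint.neg.restrict).mp hzero
  have hFalse : ∀ᵐ ω ∂(μ.restrict S), False := by
    filter_upwards [hWzero, hWneg'] with ω e1 e2
    simp only [Pi.neg_apply, Pi.zero_apply] at e1
    linarith
  have : μ.restrict S Set.univ = 0 := by simpa [ae_iff] using hFalse
  rwa [Measure.restrict_apply_univ] at this

/-- Mirror image of `keylem_neg`. -/
lemma keylem_pos {Ω : Type*} {m m₂ m0 : MeasurableSpace Ω} (hm : m ≤ m₂) (hm₂ : m₂ ≤ m0)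
    {μ : Measure Ω} [IsFiniteMeasure μ] {f : Ω → ℝ} (hf : Integrable f μ)
    {S : Set Ω} (hSm : MeasurableSet[m] S)
    (hWpos : ∀ᵐ ω ∂μ, ω ∈ S → 0 < (μ[f|m₂]) ω)
    (hEneg : ∀ᵐ ω ∂μ, ω ∈ S → (μ[f|m]) ω ≤ 0) : μ S = 0 := by
  refine keylem_neg hm hm₂ hf.neg hSm ?_ ?_
  · have h := condExp_neg (μ := μ) (m := m₂) f
    filter_upwards [h, hWpos] with ω e1 e2 hω
    rw [e1]
    simp only [Pi.neg_apply]
    linarith [e2 hω]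
  · have h := condExp_neg (μ := μ) (m := m) f
    filter_upwards [h, hEneg] with ω e1 e2 hω
    rw [e1]
    simp only [Pi.neg_apply]
    linarith [e2 hω]

/-- If `b ∈ Θ̃`, i.e. `G(X,c,b)·E(H(Y,c)|G(X,c,b),G(X,c,γ)) ≥ 0` a.s. for all
`(γ,c) ∈ Γ × C`, then `b ∈ Θ`, i.e. `G(X,c,b)·E(H(Y,c)|X) ≥ 0` a.s. for all `c ∈ C`. -/
theorem theta_tilde_subset_theta {Ω 𝓧 𝓨 P C' : Type*}
    [MeasurableSpace Ω] [MeasurableSpace 𝓧] [MeasurableSpace 𝓨]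
    (μ : Measure Ω) [IsProbabilityMeasure μ]
    (X : Ω → 𝓧) (Y : Ω → 𝓨) (hX : Measurable X) (hY : Measurable Y)
    (Γ : Set P) (C : Set C') (β : P) (hβ : β ∈ Γ)
    (G : 𝓧 → C' → P → ℝ) (H : 𝓨 → C' → ℝ)
    (hG : ∀ c b, Measurable fun x => G x c b)
    (hH : ∀ c, Measurable fun y => H y c)
    (hHint : ∀ c, Integrable (fun ω => H (Y ω) c) μ)
    -- Assumption 1 (sign restriction) for the true parameter β
    (hsign : ∀ c ∈ C, ∀ᵐ ω ∂μ,
      Real.sign (G (X ω) c β) =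
        Real.sign (condExpGiven μ X (fun ω' => H (Y ω') c) ω))
    -- Assumption 2 (continuity)
    (hcont : ∀ b ∈ Γ, ∀ c ∈ C, μ {ω | G (X ω) c b = 0} = 0)
    (b : P) (hb : b ∈ Γ)
    -- b ∈ Θ̃
    (hbTilde : ∀ γ ∈ Γ, ∀ c ∈ C, ∀ᵐ ω ∂μ,
      G (X ω) c b *
        condExpGiven μ (fun ω' => (G (X ω') c b, G (X ω') c γ))
          (fun ω' => H (Y ω') c) ω ≥ 0) :
    -- b ∈ Θ
    ∀ c ∈ C, ∀ᵐ ω ∂μ,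
      G (X ω) c b * condExpGiven μ X (fun ω' => H (Y ω') c) ω ≥ 0 := by
  intro c hc
  have hmX : MeasurableSpace.comap X inferInstance ≤ _ := hX.comap_le
  have hm_le : MeasurableSpace.comap
      (fun ω => (G (X ω) c b, G (X ω) c β)) inferInstance ≤
      MeasurableSpace.comap X inferInstance := by
    have hcomp : (fun ω => (G (X ω) c b, G (X ω) c β)) =
        (fun x => (G x c b, G x c β)) ∘ X := rfl
    rw [hcomp, ← MeasurableSpace.comap_comp]
    exact MeasurableSpace.comap_mono ((hG c b).prodMk (hG c β)).comap_le
  simp only [condExpGiven] at hsign hbTilde ⊢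
  have htilde := hbTilde β hβ c hc
  have hS1 : μ {ω | 0 < G (X ω) c b ∧ G (X ω) c β < 0} = 0 := by
    refine keylem_neg hm_le hmX (hHint c) ?_ ?_ ?_
    · exact ⟨{p : ℝ × ℝ | 0 < p.1 ∧ p.2 < 0},
        (measurableSet_lt measurable_const measurable_fst).inter
          (measurableSet_lt measurable_snd measurable_const), rfl⟩
    · filter_upwards [hsign c hc] with ω hsω hω
      have hβneg : Real.sign (G (X ω) c β) = -1 := Real.sign_of_neg hω.2
      rw [hsω] at hβneg
      by_contra h
      push_neg at h
      rcases h.lt_or_eq with h' | h'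
      · rw [Real.sign_of_pos h'] at hβneg; norm_num at hβneg
      · rw [← h', Real.sign_zero] at hβneg; norm_num at hβneg
    · filter_upwards [htilde] with ω ht hω
      nlinarith [hω.1, ht]
  have hS2 : μ {ω | G (X ω) c b < 0 ∧ 0 < G (X ω) c β} = 0 := by
    refine keylem_pos hm_le hmX (hHint c) ?_ ?_ ?_
    · exact ⟨{p : ℝ × ℝ | p.1 < 0 ∧ 0 < p.2},
        (measurableSet_lt measurable_fst measurable_const).inter
          (measurableSet_lt measurable_const measurable_snd), rfl⟩
    · filter_upwards [hsign c hc] with ω hsω hω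
      have hβpos : Real.sign (G (X ω) c β) = 1 := Real.sign_of_pos hω.2
      rw [hsω] at hβpos
      by_contra h
      push_neg at h
      rcases h.lt_or_eq with h' | h'
      · rw [Real.sign_of_neg h'] at hβpos; norm_num at hβpos
      · rw [h', Real.sign_zero] at hβpos; norm_num at hβpos
    · filter_upwards [htilde] with ω ht hω
      nlinarith [hω.1, ht]
  have hz := hcont b hb c hc
  filter_upwards [measure_eq_zero_iff_ae_notMem.mp hS1, measure_eq_zero_iff_ae_notMem.mp hS2,
    measure_eq_zero_iff_ae_notMem.mp hz, hsign c hc] with ω h1 h2 h3 hs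
  simp only [Set.mem_setOf_eq, not_and, not_lt] at h1 h2 h3
  rcases lt_trichotomy (G (X ω) c b) 0 with hlt | heq | hgt
  · have hβ' := h2 hlt
    have hW : (μ[fun ω' => H (Y ω') c|MeasurableSpace.comap X inferInstance]) ω ≤ 0 := by
      by_contra hW
      push_neg at hW
      have hsw := Real.sign_of_pos hW
      rw [← hs] at hsw
      rcases hβ'.lt_or_eq with h' | h'
      · rw [Real.sign_of_neg h'] at hsw; norm_num at hsw
      · rw [h', Real.sign_zero] at hsw; norm_num at hsw
    nlinarith [hlt.le, hW]
  · exact absurd heq h3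
  · have hβ' := h1 hgt
    have hW : 0 ≤ (μ[fun ω' => H (Y ω') c|MeasurableSpace.comap X inferInstance]) ω := by
      by_contra hW
      push_neg at hW
      have hsw := Real.sign_of_neg hW
      rw [← hs] at hsw
      rcases hβ'.lt_or_eq with h' | h'
      · rw [Real.sign_of_pos h'] at hsw; norm_num at hsw
      · rw [← h', Real.sign_zero] at hsw; norm_num at hsw
    exact mul_nonneg hgt.le hW
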